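/- Write P_k^{(j)}(x) = Σ_{m=1}^{n^k} ε_m^{(j,k)} x^m. Then for every k ∈ ℕ₀, every j with 1 ≤ j ≤ n, every m with 1 ≤ m ≤ n^k, and every x ∈ ℂ with |x| = 1, |Σ_{i=1}^m ε_i^{(j,k)} x^i| ≤ (n + √n)·n^{k/2}. -/

import Mathlib

open Polynomial Finset

/-- The vector of polynomials `(P_k^{(1)}, …, P_k^{(n)})` defined by
`P_0^{(j)}(x) = x` and `v_{k+1}(x) = A^{(n,k)}(x) v_k(x)`, where `A^{(n,k)}(x)` has
`(j,l)` entry `ω^{jl} x^{l·n^k}` with `ω = exp(2πi/n)` (indices `0`-based). -/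
noncomputable def Fvec (n : ℕ) : ℕ → Fin n → Polynomial ℂ
  | 0 => fun _ => Polynomial.X
  | k + 1 => fun j => ∑ l : Fin n,
      Polynomial.C (Complex.exp (2 * Real.pi * Complex.I / n) ^ ((j : ℕ) * (l : ℕ)))
        * Polynomial.X ^ ((l : ℕ) * n ^ k) * Fvec n k l


noncomputable def om (n : ℕ) : ℂ := Complex.exp (2 * Real.pi * Complex.I / n)

lemma om_prim (n : ℕ) (hn : 2 ≤ n) : IsPrimitiveRoot (om n) n :=
  Complex.isPrimitiveRoot_exp n (by omega)

lemma om_abs (n : ℕ) (hn : 2 ≤ n) : ‖om n‖ = 1 := by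
  have h1 : (‖om n‖)^n = 1 := by
    rw [← norm_pow, (om_prim n hn).pow_eq_one, norm_one]

  rcases lt_trichotomy (‖om n‖) 1 with h | h | h
  · have := pow_lt_one₀ (norm_nonneg _) h (by omega : n ≠ 0)
    rw [h1] at this; exact absurd this (lt_irrefl 1)
  · exact h
  · have := one_lt_pow₀ h (by omega : n ≠ 0)
    rw [h1] at this; exact absurd this (lt_irrefl 1)

lemma om_ne_zero (n : ℕ) : om n ≠ 0 := Complex.exp_ne_zero _

lemma orth (n : ℕ) (hn : 2 ≤ n) (l l' : Fin n) :
    ∑ j : Fin n, om n ^ ((j:ℕ) * (l:ℕ)) * (starRingEnd ℂ) (om n ^ ((j:ℕ) * (l':ℕ))) =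
      if l = l' then (n : ℂ) else 0 := by
  have hprim := om_prim n hn
  have habs := om_abs n hn
  have habs' : ‖om n‖ = 1 := habs
  have hω0 := om_ne_zero n
  have hωn : om n ^ n = 1 := hprim.pow_eq_one
  have hconj : ∀ e : ℕ, (starRingEnd ℂ) (om n ^ e) = (om n ^ e)⁻¹ := by
    intro e
    rw [← Complex.inv_eq_conj (by rw [norm_pow, habs', one_pow])]
  by_cases h : l = l'
  · subst h
    rw [if_pos rfl]
    have hone : ∀ j : Fin n, om n ^ ((j:ℕ) * (l:ℕ)) * (starRingEnd ℂ) (om n ^ ((j:ℕ) * (l:ℕ))) = 1 := by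
      intro j
      rw [hconj, mul_inv_cancel₀ (pow_ne_zero _ hω0)]
    rw [Finset.sum_congr rfl fun j _ => hone j]
    simp
  · rw [if_neg h]
    set u : ℂ := om n ^ (l:ℕ) * (om n ^ (l':ℕ))⁻¹ with hu
    have hun : u ^ n = 1 := by
      rw [hu, mul_pow, ← pow_mul, inv_pow, ← pow_mul, mul_comm (l:ℕ) n, mul_comm (l':ℕ) n,
        pow_mul, pow_mul, hωn, one_pow, one_pow, inv_one, mul_one]
    have hu1 : u ≠ 1 := by
      intro hc
      rw [hu, mul_inv_eq_one₀ (pow_ne_zero _ hω0)] at hc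
      exact h (Fin.ext (hprim.pow_inj l.isLt l'.isLt hc))
    have hterm : ∀ j : Fin n, om n ^ ((j:ℕ) * (l:ℕ)) * (starRingEnd ℂ) (om n ^ ((j:ℕ) * (l':ℕ))) = u ^ (j:ℕ) := by
      intro j
      rw [hconj, hu, mul_pow, ← pow_mul, inv_pow, ← pow_mul (om n) (l':ℕ) (j:ℕ),
        mul_comm (l:ℕ) (j:ℕ), mul_comm (l':ℕ) (j:ℕ)]
    rw [Finset.sum_congr rfl fun j _ => hterm j]
    rw [Fin.sum_univ_eq_sum_range (fun i => u ^ i) n]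
    rw [geom_sum_eq hu1 n, hun, sub_self, zero_div]

lemma coeff_term (a : ℂ) (e i : ℕ) (p : Polynomial ℂ) :
    (Polynomial.C a * Polynomial.X ^ e * p).coeff i =
      if e ≤ i then a * p.coeff (i - e) else 0 := by
  rw [mul_right_comm, Polynomial.coeff_mul_X_pow']
  split <;> simp [Polynomial.coeff_C_mul]

lemma Fvec_succ_coeff (n k : ℕ) (j : Fin n) (i : ℕ) :
    (Fvec n (k+1) j).coeff i = ∑ l : Fin n,
      if (l : ℕ) * n ^ k ≤ i then om n ^ ((j:ℕ)*(l:ℕ)) * (Fvec n k l).coeff (i - (l:ℕ)*n^k) else 0 := by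
  show (∑ l : Fin n, Polynomial.C (om n ^ ((j:ℕ)*(l:ℕ))) * Polynomial.X ^ ((l:ℕ) * n ^ k) * Fvec n k l).coeff i = _
  rw [Polynomial.finset_sum_coeff]
  exact Finset.sum_congr rfl fun l _ => coeff_term _ _ _ _

lemma Fvec_coeff_eq_zero (n : ℕ) (hn : 1 ≤ n) : ∀ (k : ℕ) (j : Fin n) (i : ℕ),
    i ∉ Finset.Icc 1 (n ^ k) → (Fvec n k j).coeff i = 0 := by
  intro k
  induction k with
  | zero =>
    intro j i hi
    simp only [Finset.mem_Icc, pow_zero] at hi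
    have h1 : i ≠ 1 := by omega
    show (Polynomial.X : Polynomial ℂ).coeff i = 0
    rw [Polynomial.coeff_X, if_neg (fun h => h1 h.symm)]
  | succ k ih =>
    intro j i hi
    rw [Fvec_succ_coeff]
    apply Finset.sum_eq_zero
    intro l _
    simp only [Finset.mem_Icc, not_and, not_le] at hi
    have hl : (l : ℕ) < n := l.isLt
    have hnk : 1 ≤ n ^ k := Nat.one_le_pow _ _ (by omega)
    have hlb : ((l:ℕ)+1) * n ^ k ≤ n ^ (k+1) := by
      rw [pow_succ, mul_comm (n^k) n]
      exact Nat.mul_le_mul_right _ (by omega)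
    rw [add_mul, one_mul] at hlb
    split
    · next h =>
      rw [ih l _ (by simp only [Finset.mem_Icc, not_and, not_le]; omega), mul_zero]
    · rfl

lemma Fvec_eval (n : ℕ) (hn : 1 ≤ n) (k : ℕ) (j : Fin n) (x : ℂ) :
    ∑ i ∈ Finset.Ioc 0 (n^k), (Fvec n k j).coeff i * x ^ i = (Fvec n k j).eval x := by
  have hd : (Fvec n k j).natDegree < n^k + 1 := by
    have : (Fvec n k j).natDegree ≤ n^k := Polynomial.natDegree_le_iff_coeff_eq_zero.mpr
      (fun N hN => Fvec_coeff_eq_zero n hn k j N (by simp only [Finset.mem_Icc, not_and, not_le]; omega))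
    omega
  rw [Polynomial.eval_eq_sum_range' hd]
  have hset : Finset.range (n^k+1) = insert 0 (Finset.Ioc 0 (n^k)) := by
    ext i; simp only [Finset.mem_range, Finset.mem_insert, Finset.mem_Ioc]; omega
  rw [hset, Finset.sum_insert (by simp),
    Fvec_coeff_eq_zero n hn k j 0 (by simp), zero_mul, zero_add]

lemma parseval (n : ℕ) (hn : 2 ≤ n) (c : Fin n → ℂ) :
    ∑ j : Fin n, (∑ l : Fin n, om n ^ ((j:ℕ)*(l:ℕ)) * c l) *
        (starRingEnd ℂ) (∑ l : Fin n, om n ^ ((j:ℕ)*(l:ℕ)) * c l)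
      = n * ∑ l : Fin n, c l * (starRingEnd ℂ) (c l) := by
  have step1 : ∀ j : Fin n,
      (∑ l : Fin n, om n ^ ((j:ℕ)*(l:ℕ)) * c l) * (starRingEnd ℂ) (∑ l : Fin n, om n ^ ((j:ℕ)*(l:ℕ)) * c l)
        = ∑ l : Fin n, ∑ l' : Fin n,
            (om n ^ ((j:ℕ)*(l:ℕ)) * (starRingEnd ℂ) (om n ^ ((j:ℕ)*(l':ℕ)))) * (c l * (starRingEnd ℂ) (c l')) := by
    intro j
    rw [map_sum, Finset.sum_mul_sum]
    refine Finset.sum_congr rfl fun l _ => Finset.sum_congr rfl fun l' _ => ?_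
    rw [map_mul]; ring
  rw [Finset.sum_congr rfl fun j _ => step1 j]
  rw [Finset.sum_comm]
  rw [Finset.sum_congr rfl fun l _ => Finset.sum_comm]
  have step2 : ∀ l : Fin n, ∑ l' : Fin n, ∑ j : Fin n,
      (om n ^ ((j:ℕ)*(l:ℕ)) * (starRingEnd ℂ) (om n ^ ((j:ℕ)*(l':ℕ)))) * (c l * (starRingEnd ℂ) (c l'))
      = (n : ℂ) * (c l * (starRingEnd ℂ) (c l)) := by
    intro l
    have : ∀ l' : Fin n, ∑ j : Fin n,
        (om n ^ ((j:ℕ)*(l:ℕ)) * (starRingEnd ℂ) (om n ^ ((j:ℕ)*(l':ℕ)))) * (c l * (starRingEnd ℂ) (c l'))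
        = (if l = l' then (n:ℂ) else 0) * (c l * (starRingEnd ℂ) (c l')) := by
      intro l'
      rw [← Finset.sum_mul, orth n hn l l']
    rw [Finset.sum_congr rfl fun l' _ => this l']
    simp [ite_mul]
  rw [Finset.sum_congr rfl fun l _ => step2 l, ← Finset.mul_sum]

lemma Fvec_l2 (n : ℕ) (hn : 2 ≤ n) (x : ℂ) (hx : ‖x‖ = 1) (k : ℕ) :
    ∑ j : Fin n, ((Fvec n k j).eval x) * (starRingEnd ℂ) ((Fvec n k j).eval x) = (n:ℂ)^(k+1) := by
  have hxc : x * (starRingEnd ℂ) x = 1 := by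
    rw [Complex.mul_conj, ← Complex.sq_norm, hx, one_pow, Complex.ofReal_one]
  induction k with
  | zero =>
    have : ∀ j : Fin n, ((Fvec n 0 j).eval x) * (starRingEnd ℂ) ((Fvec n 0 j).eval x) = 1 := by
      intro j
      have h0 : Fvec n 0 j = Polynomial.X := rfl
      rw [h0, Polynomial.eval_X]
      exact hxc
    rw [Finset.sum_congr rfl fun j _ => this j]
    simp
  | succ k ih =>
    have heval : ∀ j : Fin n, (Fvec n (k+1) j).eval x
        = ∑ l : Fin n, om n ^ ((j:ℕ)*(l:ℕ)) * (x ^ ((l:ℕ)*n^k) * (Fvec n k l).eval x) := by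
      intro j
      show (∑ l : Fin n, Polynomial.C (om n ^ ((j:ℕ)*(l:ℕ))) * Polynomial.X ^ ((l:ℕ) * n ^ k) * Fvec n k l).eval x = _
      rw [Polynomial.eval_finset_sum]
      exact Finset.sum_congr rfl fun l _ => by
        rw [Polynomial.eval_mul, Polynomial.eval_mul, Polynomial.eval_C, Polynomial.eval_pow,
          Polynomial.eval_X, mul_assoc]
    rw [Finset.sum_congr rfl fun j _ => by rw [heval j]]
    rw [parseval n hn]
    have hc : ∀ l : Fin n, (x ^ ((l:ℕ)*n^k) * (Fvec n k l).eval x) *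
        (starRingEnd ℂ) (x ^ ((l:ℕ)*n^k) * (Fvec n k l).eval x)
        = ((Fvec n k l).eval x) * (starRingEnd ℂ) ((Fvec n k l).eval x) := by
      intro l
      rw [map_mul, map_pow]
      have : x ^ ((l:ℕ)*n^k) * ((starRingEnd ℂ) x) ^ ((l:ℕ)*n^k) = 1 := by
        rw [← mul_pow, hxc, one_pow]
      calc x ^ ((l:ℕ)*n^k) * (Fvec n k l).eval x *
            (((starRingEnd ℂ) x) ^ ((l:ℕ)*n^k) * (starRingEnd ℂ) ((Fvec n k l).eval x))
          = (x ^ ((l:ℕ)*n^k) * ((starRingEnd ℂ) x) ^ ((l:ℕ)*n^k)) *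
            ((Fvec n k l).eval x * (starRingEnd ℂ) ((Fvec n k l).eval x)) := by ring
        _ = _ := by rw [this, one_mul]
    rw [Finset.sum_congr rfl fun l _ => hc l, ih]
    ring

lemma Fvec_l2_real (n : ℕ) (hn : 2 ≤ n) (x : ℂ) (hx : ‖x‖ = 1) (k : ℕ) :
    ∑ j : Fin n, (‖(Fvec n k j).eval x‖)^2 = (n:ℝ)^(k+1) := by
  have h := Fvec_l2 n hn x hx k
  have h2 : ∀ j : Fin n, ((Fvec n k j).eval x) * (starRingEnd ℂ) ((Fvec n k j).eval x)
      = ((‖(Fvec n k j).eval x‖)^2 : ℝ) := by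
    intro j
    rw [Complex.mul_conj, ← Complex.sq_norm]
  rw [Finset.sum_congr rfl fun j _ => h2 j] at h
  rw [← Complex.ofReal_sum] at h
  have : ((n:ℂ)^(k+1)) = (((n:ℝ)^(k+1) : ℝ) : ℂ) := by push_cast; ring
  rw [this] at h
  exact_mod_cast h

noncomputable def FvecN (n k l : ℕ) : Polynomial ℂ :=
  if h : l < n then Fvec n k ⟨l, h⟩ else 0

lemma FvecN_eq (n k : ℕ) (l : ℕ) (h : l < n) : FvecN n k l = Fvec n k ⟨l, h⟩ := dif_pos h

lemma Fvec_block_coeff (n : ℕ) (hn : 2 ≤ n) (k : ℕ) (j : Fin n) (l : ℕ) (hl : l < n) (i : ℕ)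
    (hi1 : 1 ≤ i) (hi2 : i ≤ n ^ k) :
    (Fvec n (k+1) j).coeff (l * n ^ k + i) = om n ^ ((j:ℕ) * l) * (FvecN n k l).coeff i := by
  rw [Fvec_succ_coeff, FvecN_eq n k l hl]
  rw [Finset.sum_eq_single (⟨l, hl⟩ : Fin n)]
  · rw [if_pos (Nat.le_add_right _ _), Nat.add_sub_cancel_left]
  · intro b _ hb
    have hbl : (b:ℕ) ≠ l := fun hc => hb (Fin.ext hc)
    have hnk : 1 ≤ n ^ k := Nat.one_le_pow _ _ (by omega)
    split
    · next h =>
      rw [Fvec_coeff_eq_zero n (by omega) k b _ ?_, mul_zero]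
      rcases Nat.lt_or_ge (b:ℕ) l with hc | hc
      · have h2 : ((b:ℕ)+1) * n^k ≤ l * n^k := Nat.mul_le_mul_right _ (by omega)
        rw [add_mul, one_mul] at h2
        simp only [Finset.mem_Icc, not_and, not_le]
        omega
      · have hc' : l < (b:ℕ) := by omega
        have h2 : (l+1) * n^k ≤ (b:ℕ) * n^k := Nat.mul_le_mul_right _ (by omega)
        rw [add_mul, one_mul] at h2
        simp only [Finset.mem_Icc, not_and, not_le]
        omega
    · rfl
  · intro hmem
    exact absurd (Finset.mem_univ _) hmem

lemma Fvec_psum_block (n : ℕ) (hn : 2 ≤ n) (k : ℕ) (j : Fin n) (x : ℂ) :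
    ∀ (l : ℕ), l < n → ∀ (r : ℕ), 1 ≤ r → r ≤ n ^ k →
    ∑ i ∈ Finset.Ioc 0 (l * n ^ k + r), (Fvec n (k+1) j).coeff i * x ^ i
      = (∑ l' ∈ Finset.range l, om n ^ ((j:ℕ) * l') * x ^ (l' * n ^ k) * (FvecN n k l').eval x)
        + om n ^ ((j:ℕ) * l) * x ^ (l * n ^ k) *
            ∑ i ∈ Finset.Ioc 0 r, (FvecN n k l).coeff i * x ^ i := by
  intro l
  induction l with
  | zero =>
    intro _ r hr1 hr2
    rw [Finset.range_zero, Finset.sum_empty, zero_add, zero_mul, zero_add]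
    rw [Finset.mul_sum]
    refine Finset.sum_congr rfl fun i hi => ?_
    rw [Finset.mem_Ioc] at hi
    have := Fvec_block_coeff n hn k j 0 (by omega) i hi.1 (le_trans hi.2 hr2)
    rw [zero_mul, zero_add] at this
    rw [this]
    ring
  | succ l ihl =>
    intro hl r hr1 hr2
    have hl' : l < n := by omega
    have hnk : 1 ≤ n ^ k := Nat.one_le_pow _ _ (by omega)
    have hsplit : ∑ i ∈ Finset.Ioc 0 ((l+1) * n ^ k + r), (Fvec n (k+1) j).coeff i * x ^ i
        = (∑ i ∈ Finset.Ioc 0 (l * n ^ k + n ^ k), (Fvec n (k+1) j).coeff i * x ^ i)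
          + ∑ i ∈ Finset.Ioc (l * n ^ k + n ^ k) ((l+1) * n ^ k + r), (Fvec n (k+1) j).coeff i * x ^ i := by
      rw [Finset.sum_Ioc_consecutive _ (Nat.zero_le _) (by rw [add_mul, one_mul]; omega)]
    rw [hsplit]
    rw [ihl hl' (n^k) hnk le_rfl]
    have he : ∑ i ∈ Finset.Ioc 0 (n^k), (FvecN n k l).coeff i * x ^ i = (FvecN n k l).eval x := by
      rw [FvecN_eq n k l hl']; exact Fvec_eval n (by omega) k ⟨l, hl'⟩ x
    rw [he]
    rw [Finset.sum_range_succ]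
    have hre : ∑ i ∈ Finset.Ioc (l * n ^ k + n ^ k) ((l+1) * n ^ k + r), (Fvec n (k+1) j).coeff i * x ^ i
        = om n ^ ((j:ℕ) * (l+1)) * x ^ ((l+1) * n ^ k) *
            ∑ i ∈ Finset.Ioc 0 r, (FvecN n k (l+1)).coeff i * x ^ i := by
      have hIoc : Finset.Ioc (l * n ^ k + n ^ k) ((l+1) * n ^ k + r)
          = (Finset.Ioc 0 r).map (addLeftEmbedding ((l+1) * n ^ k)) := by
        rw [Finset.map_add_left_Ioc, add_zero]
        congr 1
        rw [add_mul, one_mul]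
      rw [hIoc, Finset.sum_map]
      rw [Finset.mul_sum]
      refine Finset.sum_congr rfl fun i hi => ?_
      rw [Finset.mem_Ioc] at hi
      have hemb : addLeftEmbedding ((l+1) * n ^ k) i = (l+1) * n ^ k + i := rfl
      rw [hemb, Fvec_block_coeff n hn k j (l+1) hl i hi.1 (le_trans hi.2 hr2), pow_add]
      ring
    rw [hre]

lemma Fvec0 (n : ℕ) (j : Fin n) : Fvec n 0 j = Polynomial.X := rfl

lemma cs_bound (n : ℕ) (hn : 2 ≤ n) (k : ℕ) (x : ℂ) (hx : ‖x‖ = 1)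
    (l : ℕ) (hl : l ≤ n) :
    ∑ l' ∈ Finset.range l, ‖(FvecN n k l').eval x‖
      ≤ Real.sqrt ((l:ℝ) * (n:ℝ)^(k+1)) := by
  set a : ℕ → ℝ := fun l' => ‖(FvecN n k l').eval x‖ with ha
  have ha0 : ∀ l', 0 ≤ a l' := fun l' => norm_nonneg _
  have hS0 : 0 ≤ ∑ l' ∈ Finset.range l, a l' := Finset.sum_nonneg fun i _ => ha0 i
  have hfull : ∑ l' ∈ Finset.range n, (a l')^2 = (n:ℝ)^(k+1) := by
    rw [← Fvec_l2_real n hn x hx k, ← Fin.sum_univ_eq_sum_range (fun l' => (a l')^2) n]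
    refine Finset.sum_congr rfl fun j _ => ?_
    rw [ha]
    simp only
    rw [FvecN_eq n k (j:ℕ) j.isLt, Fin.eta]
  have hsub : ∑ l' ∈ Finset.range l, (a l')^2 ≤ (n:ℝ)^(k+1) := by
    rw [← hfull]
    exact Finset.sum_le_sum_of_subset_of_nonneg (Finset.range_subset_range.mpr hl)
      (fun i _ _ => sq_nonneg _)
  have hcs : (∑ l' ∈ Finset.range l, a l')^2 ≤ (l:ℝ) * ∑ l' ∈ Finset.range l, (a l')^2 := by
    have := sq_sum_le_card_mul_sum_sq (s := Finset.range l) (f := a)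
    simpa using this
  have h2 : (∑ l' ∈ Finset.range l, a l')^2 ≤ (l:ℝ) * (n:ℝ)^(k+1) :=
    hcs.trans (mul_le_mul_of_nonneg_left hsub (Nat.cast_nonneg _))
  calc ∑ l' ∈ Finset.range l, a l' = Real.sqrt ((∑ l' ∈ Finset.range l, a l')^2) :=
        (Real.sqrt_sq hS0).symm
    _ ≤ Real.sqrt ((l:ℝ) * (n:ℝ)^(k+1)) := Real.sqrt_le_sqrt h2

lemma split_m (N n m : ℕ) (hN : 1 ≤ N) (hm1 : 1 ≤ m) (hmn : m ≤ n * N) :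
    ∃ l r, l < n ∧ 1 ≤ r ∧ r ≤ N ∧ m = l * N + r := by
  have hdm := Nat.div_add_mod (m-1) N
  have hmod := Nat.mod_lt (m-1) (show 0 < N by omega)
  have hc : N * ((m-1)/N) = ((m-1)/N) * N := Nat.mul_comm _ _
  refine ⟨(m-1)/N, m - ((m-1)/N) * N, ?_, ?_, ?_, ?_⟩
  · rw [Nat.div_lt_iff_lt_mul (show 0 < N by omega)]
    omega
  · omega
  · omega
  · omega

lemma main_bound (n : ℕ) (hn : 2 ≤ n) : ∀ (k : ℕ) (j : Fin n) (m : ℕ), 1 ≤ m → m ≤ n^k →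
    ∀ x : ℂ, ‖x‖ = 1 →
    ‖∑ i ∈ Finset.Ioc 0 m, (Fvec n k j).coeff i * x ^ i‖
      ≤ ((n:ℝ) + Real.sqrt n) * Real.sqrt ((n:ℝ)^k) - ((n:ℝ) + Real.sqrt n - 1) := by
  intro k
  induction k with
  | zero =>
    intro j m hm1 hm2 x hx
    have hm : m = 1 := by simp only [pow_zero] at hm2; omega
    subst hm
    have hIoc : Finset.Ioc 0 1 = ({1} : Finset ℕ) := by
      ext i; simp only [Finset.mem_Ioc, Finset.mem_singleton]; omega
    rw [hIoc, Finset.sum_singleton, Fvec0, Polynomial.coeff_X_one, one_mul, pow_one, hx]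
    rw [pow_zero, Real.sqrt_one]
    ring_nf
    nlinarith [Real.sqrt_nonneg (n:ℝ)]
  | succ k ih =>
    intro j m hm1 hm2 x hx
    have hN1 : 1 ≤ n ^ k := Nat.one_le_pow _ _ (by omega)
    have hmn : m ≤ n * n ^ k := by rw [← pow_succ']; exact hm2
    obtain ⟨l, r, hl, hr1, hr2, hm'⟩ := split_m (n^k) n m hN1 hm1 hmn
    rw [hm', Fvec_psum_block n hn k j x l hl r hr1 hr2]
    have habs_term : ∀ l' : ℕ, ‖om n ^ ((j:ℕ) * l') * x ^ (l' * n ^ k) * (FvecN n k l').eval x‖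
        = ‖(FvecN n k l').eval x‖ := by
      intro l'
      rw [norm_mul, norm_mul, norm_pow, norm_pow, om_abs n hn, hx, one_pow, one_pow, one_mul, one_mul]
    have htri : ‖(∑ l' ∈ Finset.range l, om n ^ ((j:ℕ) * l') * x ^ (l' * n ^ k) * (FvecN n k l').eval x)
        + om n ^ ((j:ℕ) * l) * x ^ (l * n ^ k) * ∑ i ∈ Finset.Ioc 0 r, (FvecN n k l).coeff i * x ^ i‖
        ≤ (∑ l' ∈ Finset.range l, ‖(FvecN n k l').eval x‖)
          + ‖∑ i ∈ Finset.Ioc 0 r, (FvecN n k l).coeff i * x ^ i‖ := by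
      refine (norm_add_le _ _).trans ?_
      gcongr
      · refine (norm_sum_le _ _).trans ?_
        exact le_of_eq (Finset.sum_congr rfl fun l' _ => habs_term l')
      · rw [norm_mul, norm_mul, norm_pow, norm_pow, om_abs n hn, hx, one_pow, one_pow, one_mul, one_mul]
    have hIH : ‖∑ i ∈ Finset.Ioc 0 r, (FvecN n k l).coeff i * x ^ i‖
        ≤ ((n:ℝ) + Real.sqrt n) * Real.sqrt ((n:ℝ)^k) - ((n:ℝ) + Real.sqrt n - 1) := by
      rw [FvecN_eq n k l hl]
      exact ih ⟨l, hl⟩ r hr1 hr2 x hx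
    have hn2 : (2:ℝ) ≤ (n:ℝ) := by exact_mod_cast hn
    have hcs := cs_bound n hn k x hx l (by omega)
    have hsl : Real.sqrt ((l:ℝ) * (n:ℝ)^(k+1)) ≤ Real.sqrt (((n:ℝ)-1) * (n:ℝ)^(k+1)) := by
      apply Real.sqrt_le_sqrt
      apply mul_le_mul_of_nonneg_right _ (by positivity)
      have h3 : (l:ℝ) + 1 ≤ (n:ℝ) := by exact_mod_cast Nat.succ_le_of_lt hl
      linarith
    -- arithmetic
    have hs : Real.sqrt (n:ℝ) * Real.sqrt (n:ℝ) = (n:ℝ) := Real.mul_self_sqrt (by positivity)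
    have hs1 : 1 ≤ Real.sqrt (n:ℝ) := by
      rw [show (1:ℝ) = Real.sqrt 1 by rw [Real.sqrt_one]]
      exact Real.sqrt_le_sqrt (by exact_mod_cast hn.trans' (by norm_num))
    have ht0 : 0 ≤ Real.sqrt ((n:ℝ)^k) := Real.sqrt_nonneg _
    have hu : Real.sqrt ((n:ℝ)-1) ≤ (n:ℝ) - 1 := by
      calc Real.sqrt ((n:ℝ)-1) ≤ Real.sqrt (((n:ℝ)-1)^2) := Real.sqrt_le_sqrt (by nlinarith)
        _ = (n:ℝ)-1 := Real.sqrt_sq (by linarith)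
    have hu0 : 0 ≤ Real.sqrt ((n:ℝ)-1) := Real.sqrt_nonneg _
    have hsplit1 : Real.sqrt (((n:ℝ)-1) * (n:ℝ)^(k+1))
        = Real.sqrt ((n:ℝ)-1) * (Real.sqrt (n:ℝ) * Real.sqrt ((n:ℝ)^k)) := by
      rw [Real.sqrt_mul (by linarith) _,
        pow_succ, mul_comm ((n:ℝ)^k) (n:ℝ), Real.sqrt_mul (by positivity)]
    have hsplit2 : Real.sqrt ((n:ℝ)^(k+1)) = Real.sqrt (n:ℝ) * Real.sqrt ((n:ℝ)^k) := by
      rw [pow_succ, mul_comm ((n:ℝ)^k) (n:ℝ), Real.sqrt_mul (by positivity)]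
    calc ‖_‖ ≤ _ := htri
      _ ≤ Real.sqrt ((l:ℝ) * (n:ℝ)^(k+1)) + (((n:ℝ) + Real.sqrt n) * Real.sqrt ((n:ℝ)^k) - ((n:ℝ) + Real.sqrt n - 1)) := by
          exact add_le_add hcs hIH
      _ ≤ Real.sqrt (((n:ℝ)-1) * (n:ℝ)^(k+1)) + (((n:ℝ) + Real.sqrt n) * Real.sqrt ((n:ℝ)^k) - ((n:ℝ) + Real.sqrt n - 1)) := by
          linarith
      _ ≤ ((n:ℝ) + Real.sqrt n) * Real.sqrt ((n:ℝ)^(k+1)) - ((n:ℝ) + Real.sqrt n - 1) := by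
          rw [hsplit1, hsplit2]
          have hn2 : (2:ℝ) ≤ (n:ℝ) := by exact_mod_cast hn
          nlinarith [mul_nonneg (mul_nonneg ht0 (Real.sqrt_nonneg (n:ℝ))) (sub_nonneg.mpr hu)]

/-- Partial sums of the coefficient sequence of `P_k^{(j)}` satisfy
`|∑_{i=1}^m ε_i^{(j,k)} x^i| ≤ (n + √n)·n^{k/2}` on the unit circle. -/
theorem stmt18 (n : ℕ) (hn : 2 ≤ n) (k : ℕ) (j : Fin n)
    (m : ℕ) (hm1 : 1 ≤ m) (hm2 : m ≤ n ^ k) (x : ℂ) (hx : ‖x‖ = 1) :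
    ‖∑ i ∈ Finset.Icc 1 m, (Fvec n k j).coeff i * x ^ i‖
      ≤ ((n : ℝ) + Real.sqrt n) * (n : ℝ) ^ ((k : ℝ) / 2) := by
  have hIcc : Finset.Icc 1 m = Finset.Ioc 0 m := by
    ext i; simp only [Finset.mem_Icc, Finset.mem_Ioc]; omega
  rw [hIcc]
  have h := main_bound n hn k j m hm1 hm2 x hx
  have hr : Real.sqrt ((n:ℝ)^k) = (n:ℝ) ^ ((k:ℝ)/2) := by
    rw [Real.sqrt_eq_rpow, ← Real.rpow_natCast (n:ℝ) k, ← Real.rpow_mul (by positivity)]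
    ring_nf
  rw [hr] at h
  have hs0 : 0 ≤ Real.sqrt (n:ℝ) := Real.sqrt_nonneg _
  have hn2 : (2:ℝ) ≤ (n:ℝ) := by exact_mod_cast hn
  linarith
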